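/- Let Θ be a finite-dimensional normed real vector space, let f : Θ → ℝ be lower semicontinuous, bounded below, and coercive (f(θ) → ∞ as ‖θ‖ → ∞), with a unique global minimizer θ* (f(θ*) ≤ f(θ) for all θ and f(θ) > f(θ*) for all θ ≠ θ*). Let D : P(Θ) → [0, ∞] be any nonnegative functional, let Q ⊆ P(Θ) be nonempty, and assume there exists a sequence (p_k) in Q with D(p_k) < ∞ for every k and ∫_Θ f dp_k → f(θ*) as k → ∞. Define F̄_n(q) = ∫_Θ f dq + (1/n) D(q). Let (ε_n) be nonnegative reals with ε_n → 0 and let q_n ∈ Q satisfy F̄_n(q_n) ≤ inf_{q ∈ Q} F̄_n(q) + ε_n for every n. Then q_n converges weakly to the Dirac measure δ_{θ*}, F̄_n(q_n) → f(θ*), and ∫_Θ f dq_n → f(θ*). -/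

import Mathlib

open MeasureTheory Filter
open scoped ENNReal NNReal

/-- A lower semicontinuous function strictly above `a` on a compact set is uniformly
bounded away from `a` there. -/
lemma gvi_lsc_gap {Θ : Type*} [TopologicalSpace Θ] {f : Θ → ℝ}
    (hf : LowerSemicontinuous f) {K : Set Θ} (hK : IsCompact K) {a : ℝ}
    (h : ∀ x ∈ K, a < f x) : ∃ c > 0, ∀ x ∈ K, a + c ≤ f x := by
  obtain ⟨t, ht⟩ := hK.elim_finite_subcover
    (fun x : K => f ⁻¹' Set.Ioi (a + (f x - a) / 2))
    (fun x => hf.isOpen_preimage _)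
    (fun x hx => Set.mem_iUnion.mpr ⟨⟨x, hx⟩, by
      simp only [Set.mem_preimage, Set.mem_Ioi]; linarith [h x hx]⟩)
  rcases t.eq_empty_or_nonempty with rfl | hne
  · exact ⟨1, one_pos, fun x hx => absurd (ht hx) (by simp)⟩
  · refine ⟨t.inf' hne (fun i => (f i - a) / 2), ?_, ?_⟩
    · exact (Finset.lt_inf'_iff hne).mpr fun i _ => by linarith [h i i.2]
    · intro x hx
      obtain ⟨i, hi, hxi⟩ := Set.mem_iUnion₂.mp (ht hx)
      have h1 : a + (f i - a) / 2 < f x := hxi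
      have h2 : t.inf' hne (fun i => (f i - a) / 2) ≤ (f ↑i - a) / 2 :=
        Finset.inf'_le _ hi
      linarith

/-- **Consistency of ε-minimizers of the auxiliary GVI objective.**
Let `Θ` be a finite-dimensional normed real vector space, `f : Θ → ℝ` lower
semicontinuous, bounded below by `B`, coercive, with a unique global minimizer `θs`.
Let `D : P(Θ) → [0, ∞]` and `Q ⊆ P(Θ)` nonempty, with a sequence `p_k ∈ Q` with
`D (p_k) < ∞` and `∫ f dp_k → f θs`.  The extended integral `∫ f dq ∈ (−∞, ∞]` is
encoded as `B + I q`, `I q = ∫⁻ (f θ − B) dq`, and the auxiliary objective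
`F̄_n(q) = ∫ f dq + (1/n) D q` is encoded (shifted by `−B`) as `I q + (1/n) D q`.
If `ε_n ≥ 0`, `ε_n → 0`, and `q_n ∈ Q` satisfies `F̄_n(q_n) ≤ inf_{q ∈ Q} F̄_n(q) + ε_n`
for every `n`, then `q_n → δ_{θs}` weakly, `F̄_n(q_n) → f θs`, and `∫ f dq_n → f θs`. -/
theorem gvi_auxiliary_epsilon_minimizers_consistent
    {Θ : Type*} [NormedAddCommGroup Θ] [NormedSpace ℝ Θ] [FiniteDimensional ℝ Θ]
    [MeasurableSpace Θ] [BorelSpace Θ]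
    (f : Θ → ℝ) (hf : LowerSemicontinuous f)
    (B : ℝ) (hB : ∀ θ, B ≤ f θ)
    (hcoer : Tendsto f (Filter.comap (fun θ => ‖θ‖) atTop) atTop)
    (θs : Θ) (hmin : ∀ θ, f θs ≤ f θ) (huniq : ∀ θ, θ ≠ θs → f θs < f θ)
    (D : ProbabilityMeasure Θ → ℝ≥0∞)
    (Q : Set (ProbabilityMeasure Θ)) (hQ : Q.Nonempty)
    (p : ℕ → ProbabilityMeasure Θ) (hpQ : ∀ k, p k ∈ Q) (hpD : ∀ k, D (p k) < ⊤)
    (hpI : Tendsto (fun k => ∫⁻ θ, ENNReal.ofReal (f θ - B) ∂(p k : Measure Θ))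
      atTop (nhds (ENNReal.ofReal (f θs - B))))
    (ε : ℕ → ℝ) (hε0 : ∀ n, 0 ≤ ε n) (hεlim : Tendsto ε atTop (nhds 0))
    (qn : ℕ → ProbabilityMeasure Θ) (hqnQ : ∀ n, qn n ∈ Q)
    (hqn : ∀ n : ℕ, 1 ≤ n →
      (∫⁻ θ, ENNReal.ofReal (f θ - B) ∂(qn n : Measure Θ)) + ((n : ℝ≥0∞))⁻¹ * D (qn n) ≤
      (⨅ q ∈ Q, (∫⁻ θ, ENNReal.ofReal (f θ - B) ∂(q : Measure Θ)) + ((n : ℝ≥0∞))⁻¹ * D q)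
        + ENNReal.ofReal (ε n)) :
    Tendsto qn atTop
        (nhds (⟨Measure.dirac θs, inferInstance⟩ : ProbabilityMeasure Θ)) ∧
    Tendsto
      (fun n : ℕ =>
        (∫⁻ θ, ENNReal.ofReal (f θ - B) ∂(qn n : Measure Θ)) + ((n : ℝ≥0∞))⁻¹ * D (qn n))
      atTop (nhds (ENNReal.ofReal (f θs - B))) ∧
    Tendsto (fun n : ℕ => ∫⁻ θ, ENNReal.ofReal (f θ - B) ∂(qn n : Measure Θ))
      atTop (nhds (ENNReal.ofReal (f θs - B))) := by
  haveI : ProperSpace Θ := FiniteDimensional.proper ℝ Θ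
  set m : ℝ≥0∞ := ENNReal.ofReal (f θs - B) with hm
  set I : ProbabilityMeasure Θ → ℝ≥0∞ :=
    fun q => ∫⁻ θ, ENNReal.ofReal (f θ - B) ∂(q : Measure Θ) with hIdef
  have hmtop : m ≠ ⊤ := ENNReal.ofReal_ne_top
  -- Lower bound: `m ≤ I q` for every probability measure `q`.
  have hL1 : ∀ q : ProbabilityMeasure Θ, m ≤ I q := by
    intro q
    calc m = ∫⁻ _, m ∂(q : Measure Θ) := by simp
      _ ≤ I q := lintegral_mono fun θ =>
          ENNReal.ofReal_le_ofReal (by linarith [hmin θ])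
  set F : ℕ → ℝ≥0∞ := fun n => I (qn n) + ((n : ℝ≥0∞))⁻¹ * D (qn n) with hFdef
  -- limsup of `F` is at most `m`.
  have hlimsup : limsup F atTop ≤ m := by
    refine ENNReal.le_of_forall_pos_le_add fun ε' hε' _ => ?_
    set e : ℝ≥0∞ := (ε' : ℝ≥0∞) / 3 with he
    have he0 : 0 < e := ENNReal.div_pos (by exact_mod_cast hε'.ne') (by norm_num)
    obtain ⟨k, hk⟩ := (hpI.eventually_lt_const
      (show m < m + e from ENNReal.lt_add_right hmtop he0.ne')).exists
    have htend1 : Tendsto (fun n : ℕ => ((n : ℝ≥0∞))⁻¹ * D (p k)) atTop (nhds 0) := by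
      have := ENNReal.Tendsto.mul_const ENNReal.tendsto_inv_nat_nhds_zero
        (b := D (p k)) (Or.inr (hpD k).ne)
      simpa using this
    have htend2 : Tendsto (fun n => ENNReal.ofReal (ε n)) atTop (nhds 0) := by
      simpa [ENNReal.ofReal_zero] using ENNReal.tendsto_ofReal hεlim
    refine limsup_le_of_le (by isBoundedDefault) ?_
    filter_upwards [htend1.eventually_lt_const he0, htend2.eventually_lt_const he0,
      eventually_ge_atTop 1] with n hn1 hn2 hn3
    calc F n ≤ (⨅ q ∈ Q, I q + ((n : ℝ≥0∞))⁻¹ * D q) + ENNReal.ofReal (ε n) :=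
          hqn n hn3
      _ ≤ (I (p k) + ((n : ℝ≥0∞))⁻¹ * D (p k)) + ENNReal.ofReal (ε n) := by
          gcongr
          exact iInf₂_le (p k) (hpQ k)
      _ ≤ (m + e + e) + e :=
          add_le_add (add_le_add hk.le hn1.le) hn2.le
      _ = m + ((ε' : ℝ≥0∞) / 3 + (ε' : ℝ≥0∞) / 3 + (ε' : ℝ≥0∞) / 3) := by
          rw [he]; ring
      _ = m + ε' := by rw [ENNReal.add_thirds]
  have hliminf : m ≤ liminf F atTop := by
    refine le_liminf_of_le (by isBoundedDefault) ?_
    exact Eventually.of_forall fun n => le_trans (hL1 (qn n)) le_self_add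
  have hF : Tendsto F atTop (nhds m) :=
    tendsto_of_le_liminf_of_limsup_le hliminf hlimsup
  have hI3 : Tendsto (fun n => I (qn n)) atTop (nhds m) :=
    tendsto_of_tendsto_of_tendsto_of_le_of_le tendsto_const_nhds hF
      (fun n => hL1 (qn n)) (fun n => le_self_add)
  -- Coercivity: outside a large ball, `f ≥ f θs + 1`.
  obtain ⟨R, hR⟩ : ∃ R : ℝ, ∀ θ : Θ, R ≤ ‖θ‖ → f θs + 1 ≤ f θ := by
    have h := hcoer.eventually (eventually_ge_atTop (f θs + 1))
    rw [eventually_comap, eventually_atTop] at h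
    obtain ⟨R, hR⟩ := h
    exact ⟨R, fun θ hθ => hR ‖θ‖ hθ θ rfl⟩
  -- Weak convergence to the Dirac measure.
  set δm : ProbabilityMeasure Θ := ⟨Measure.dirac θs, inferInstance⟩ with hδm
  have hweak : Tendsto qn atTop (nhds δm) := by
    apply MeasureTheory.tendsto_of_forall_isOpen_le_liminf
    intro G hG
    by_cases hθG : θs ∈ G
    · -- gap on `Gᶜ`
      have hGc : MeasurableSet Gᶜ := hG.measurableSet.compl
      obtain ⟨c, hc, hgap⟩ : ∃ c > 0, ∀ θ, θ ∉ G → f θs + c ≤ f θ := by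
        have hKcomp : IsCompact (Gᶜ ∩ Metric.closedBall 0 R) :=
          (isCompact_closedBall 0 R).inter_left hG.isClosed_compl
        obtain ⟨c₀, hc₀, hgap₀⟩ := gvi_lsc_gap hf hKcomp (a := f θs)
          (fun x hx => huniq x (fun h => hx.1 (h ▸ hθG)))
        refine ⟨min c₀ 1, lt_min hc₀ one_pos, fun θ hθ => ?_⟩
        rcases le_or_gt ‖θ‖ R with h | h
        · have := hgap₀ θ ⟨hθ, mem_closedBall_zero_iff.mpr h⟩
          have := min_le_left c₀ 1
          linarith
        · have := hR θ h.le
          have := min_le_right c₀ 1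
          linarith
      set c' : ℝ≥0∞ := ENNReal.ofReal c with hc'
      have hc'0 : c' ≠ 0 := by
        exact (ENNReal.ofReal_pos.mpr hc).ne'
      -- Markov-type inequality
      have hmark : ∀ q : ProbabilityMeasure Θ,
          m + c' * (q : Measure Θ) Gᶜ ≤ I q := by
        intro q
        have hpt : ∀ θ, m + Gᶜ.indicator (fun _ => c') θ
            ≤ ENNReal.ofReal (f θ - B) := by
          intro θ
          by_cases hθ : θ ∈ Gᶜ
          · rw [Set.indicator_of_mem hθ, hm, hc',
              ← ENNReal.ofReal_add (by linarith [hB θs]) hc.le]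
            exact ENNReal.ofReal_le_ofReal (by linarith [hgap θ hθ])
          · rw [Set.indicator_of_notMem hθ, add_zero]
            exact ENNReal.ofReal_le_ofReal (by linarith [hmin θ])
        calc m + c' * (q : Measure Θ) Gᶜ
            = ∫⁻ θ, (m + Gᶜ.indicator (fun _ => c') θ) ∂(q : Measure Θ) := by
              rw [lintegral_add_left measurable_const, lintegral_const,
                lintegral_indicator hGc _, setLIntegral_const, measure_univ, mul_one]
          _ ≤ I q := lintegral_mono hpt
      have hbound : ∀ q : ProbabilityMeasure Θ,
          (q : Measure Θ) Gᶜ ≤ (I q - m) * c'⁻¹ := by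
        intro q
        have hc't : c' ≠ ⊤ := ENNReal.ofReal_ne_top
        have h2 : (q : Measure Θ) Gᶜ ≤ (I q - m) / c' := by
          rw [ENNReal.le_div_iff_mul_le (Or.inl hc'0) (Or.inl hc't), mul_comm]
          exact ENNReal.le_sub_of_add_le_left hmtop (hmark q)
        rwa [div_eq_mul_inv] at h2
      have hzero : Tendsto (fun n => (I (qn n) - m) * c'⁻¹) atTop (nhds 0) := by
        have hs : Tendsto (fun n => I (qn n) - m) atTop (nhds 0) := by
          have := ENNReal.Tendsto.sub hI3 (tendsto_const_nhds (x := m))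
            (f := atTop) (Or.inr hmtop)
          simpa using this
        have := ENNReal.Tendsto.mul_const hs (b := c'⁻¹)
          (Or.inr (ENNReal.inv_ne_top.mpr hc'0))
        simpa using this
      have h0 : Tendsto (fun n => (qn n : Measure Θ) Gᶜ) atTop (nhds 0) :=
        tendsto_of_tendsto_of_tendsto_of_le_of_le tendsto_const_nhds hzero
          (fun n => zero_le) (fun n => hbound (qn n))
      have h1 : Tendsto (fun n => (qn n : Measure Θ) G) atTop (nhds 1) := by
        have heq : ∀ n, (qn n : Measure Θ) G = 1 - (qn n : Measure Θ) Gᶜ := by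
          intro n
          have := prob_compl_eq_one_sub (μ := (qn n : Measure Θ)) hGc
          rwa [compl_compl] at this
        simp only [heq]
        have := ENNReal.Tendsto.sub (tendsto_const_nhds (x := (1 : ℝ≥0∞)))
          (f := atTop) h0 (Or.inl ENNReal.one_ne_top)
        simpa using this
      have h1' : Tendsto (fun n => qn n G) atTop (nhds 1) := by
        apply ENNReal.tendsto_coe.mp
        simpa [ProbabilityMeasure.ennreal_coeFn_eq_coeFn_toMeasure] using h1
      rw [h1'.liminf_eq]
      exact ProbabilityMeasure.apply_le_one _ G
    · have : δm G = 0 := by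
        rw [← ENNReal.coe_eq_zero, ProbabilityMeasure.ennreal_coeFn_eq_coeFn_toMeasure]
        show Measure.dirac θs G = 0
        simp [Measure.dirac_apply' θs hG.measurableSet, Set.indicator_of_notMem hθG]
      rw [this]
      exact zero_le
  exact ⟨hweak, hF, hI3⟩
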